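/- Let u : ℝ² → ℝ be a C² function solving L_u(L_u u) = 0 on ℝ², and let A, B, x(c,t) be as above. Then for every fixed t ∈ ℝ, the map c ↦ x(c,t) is strictly increasing on ℝ; in particular, the characteristic parabolas t ↦ (x(c,t), t) corresponding to distinct values of c never intersect. -/

import Mathlib

/-- The operator `L_u` acting on `v`:  `(L_u v)(x,t) = ∂v/∂t + u·∂v/∂x`,
with coordinates `(x,t)` on `ℝ × ℝ`. -/
noncomputable def Lop (u v : ℝ × ℝ → ℝ) : ℝ × ℝ → ℝ :=
  fun p => fderiv ℝ v p (0, 1) + u p * fderiv ℝ v p (1, 0)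

open Set

theorem stmt2 (u : ℝ × ℝ → ℝ) (hu : ContDiff ℝ 2 u)
    (hpde : ∀ p : ℝ × ℝ, Lop u (Lop u u) p = 0)
    (A B : ℝ → ℝ) (hA : ∀ c, A c = Lop u u (c, 0)) (hB : ∀ c, B c = u (c, 0))
    (X : ℝ → ℝ → ℝ) (hX : ∀ c t, X c t = A c / 2 * t ^ 2 + B c * t + c) :
    (∀ t : ℝ, StrictMono fun c => X c t) ∧
    ∀ c c' : ℝ, c ≠ c' → ∀ t : ℝ, (X c t, t) ≠ (X c' t, t) := by
  have hud : Differentiable ℝ u := hu.differentiable (by norm_num)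
  have hfd : ContDiff ℝ 1 (fun p => fderiv ℝ u p) := hu.fderiv_right (by norm_num)
  have hw : ContDiff ℝ 1 (Lop u u) := by
    unfold Lop
    exact (hfd.clm_apply contDiff_const).add
      ((hu.of_le (by norm_num)).mul (hfd.clm_apply contDiff_const))
  have hwd : Differentiable ℝ (Lop u u) := hw.differentiable one_ne_zero
  -- key fact: along the parabolas, u and Lop u u take the expected values
  have key : ∀ c t, u (X c t, t) = A c * t + B c ∧ Lop u u (X c t, t) = A c := by
    intro c τ
    set a : ℝ := -(|τ| + 1) with ha
    set b : ℝ := |τ| + 1 with hb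
    have hab : a < b := by
      have := abs_nonneg τ; simp only [ha, hb]; linarith
    have h0ab : (0 : ℝ) ∈ Ioo a b := by
      constructor <;> simp only [ha, hb] <;> [linarith [abs_nonneg τ]; linarith [abs_nonneg τ]]
    have hτab : τ ∈ Ioo a b := by
      constructor <;> simp only [ha, hb] <;>
        [linarith [neg_abs_le τ]; linarith [le_abs_self τ]]
    -- derivative of the parabola
    have hXD : ∀ s : ℝ, HasDerivAt (fun s => X c s) (A c * s + B c) s := by
      intro s
      have h2 : HasDerivAt (fun y : ℝ => A c / 2 * y ^ 2 + B c * y + c)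
          (A c / 2 * ((2 : ℕ) * s ^ (2 - 1)) + B c * 1) s :=
        (((hasDerivAt_pow 2 s).const_mul (A c / 2)).add
          ((hasDerivAt_id s).const_mul (B c))).add_const c
      have h1 : HasDerivAt (fun y : ℝ => A c / 2 * y ^ 2 + B c * y + c) (A c * s + B c) s := by
        convert h2 using 1; push_cast; ring
      simpa only [hX] using h1
    have hγ : ∀ s : ℝ, HasDerivAt (fun s => ((X c s, s) : ℝ × ℝ)) ((A c * s + B c, 1) : ℝ × ℝ) s :=
      fun s => (hXD s).prodMk (hasDerivAt_id s)
    -- chain rule along the parabola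
    have chain : ∀ f : ℝ × ℝ → ℝ, Differentiable ℝ f → ∀ s : ℝ,
        HasDerivAt (fun s => f (X c s, s))
          ((A c * s + B c) * (fderiv ℝ f (X c s, s)) (1, 0) + (fderiv ℝ f (X c s, s)) (0, 1)) s := by
      intro f hf s
      have h2 := HasFDerivAt.comp_hasDerivAt (f := fun s => ((X c s, s) : ℝ × ℝ)) s ((hf (X c s, s)).hasFDerivAt) (hγ s)
      refine h2.congr_deriv ?_
      have h3 : ((A c * s + B c, 1) : ℝ × ℝ) = (A c * s + B c) • ((1 : ℝ), (0 : ℝ)) + (0, 1) := by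
        simp [Prod.ext_iff]
      rw [h3, map_add, map_smul, smul_eq_mul]
    set G : ℝ → ℝ := fun s => u (X c s, s) - (A c * s + B c) with hG
    set H : ℝ → ℝ := fun s => Lop u u (X c s, s) - A c with hH
    set P0 : ℝ → ℝ := fun s => fderiv ℝ u (X c s, s) (1, 0) with hP0
    set Q0 : ℝ → ℝ := fun s => fderiv ℝ (Lop u u) (X c s, s) (1, 0) with hQ0
    have hG0 : G 0 = 0 := by
      simp only [hG, hX, hB c]; norm_num
    have hH0 : H 0 = 0 := by
      simp only [hH, hX, hA c]; norm_num
    have hGd : ∀ s : ℝ, HasDerivAt G (H s - G s * P0 s) s := by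
      intro s
      have h2 : HasDerivAt (fun y : ℝ => A c * y + B c) (A c * 1) s :=
        ((hasDerivAt_id s).const_mul (A c)).add_const (B c)
      have h1 : HasDerivAt G
          (((A c * s + B c) * (fderiv ℝ u (X c s, s)) (1, 0) + (fderiv ℝ u (X c s, s)) (0, 1))
            - A c * 1) s := (chain u hud s).sub h2
      convert h1 using 1
      simp only [hG, hH, hP0, Lop]
      ring
    have hHd : ∀ s : ℝ, HasDerivAt H (-(Q0 s * G s)) s := by
      intro s
      have h1 : HasDerivAt H
          ((A c * s + B c) * (fderiv ℝ (Lop u u) (X c s, s)) (1, 0)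
            + (fderiv ℝ (Lop u u) (X c s, s)) (0, 1)) s := (chain (Lop u u) hwd s).sub_const (A c)
      convert h1 using 1
      have hp := hpde (X c s, s)
      simp only [Lop] at hp ⊢
      have h3 : (fderiv ℝ (Lop u u) (X c s, s)) (0, 1)
          = -(u (X c s, s) * (fderiv ℝ (Lop u u) (X c s, s)) (1, 0)) := by
        linarith
      rw [h3]
      simp only [hG, hQ0, Lop]
      ring
    -- clamping and bounds
    set cl : ℝ → ℝ := fun s => max a (min s b) with hcl
    have hclmem : ∀ s, cl s ∈ Icc a b :=
      fun s => ⟨le_max_left _ _, max_le hab.le (min_le_right _ _)⟩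
    have hclid : ∀ s ∈ Ioo a b, cl s = s := by
      intro s hs
      simp only [hcl, min_eq_left hs.2.le, max_eq_right hs.1.le]
    have hγc : Continuous (fun s => ((X c s, s) : ℝ × ℝ)) := by
      have hXc : (fun s => X c s) = fun s => A c / 2 * s ^ 2 + B c * s + c := funext (hX c)
      have : Continuous (fun s => X c s) := by rw [hXc]; fun_prop
      exact this.prodMk continuous_id
    have hP0c : Continuous P0 :=
      ((hu.continuous_fderiv (by norm_num)).comp hγc).clm_apply continuous_const
    have hQ0c : Continuous Q0 :=
      ((hw.continuous_fderiv one_ne_zero).comp hγc).clm_apply continuous_const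
    obtain ⟨M1, hM1⟩ :=
      (isCompact_Icc : IsCompact (Icc a b)).exists_bound_of_continuousOn hP0c.continuousOn
    obtain ⟨M2, hM2⟩ :=
      (isCompact_Icc : IsCompact (Icc a b)).exists_bound_of_continuousOn hQ0c.continuousOn
    set M : ℝ := max (max M1 M2) 0 with hM
    have hM0 : (0 : ℝ) ≤ M := le_max_right _ _
    have hPb : ∀ s, |P0 (cl s)| ≤ M := by
      intro s
      have := hM1 _ (hclmem s)
      rw [Real.norm_eq_abs] at this
      exact this.trans (le_trans (le_max_left M1 M2) (le_max_left _ _))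
    have hQb : ∀ s, |Q0 (cl s)| ≤ M := by
      intro s
      have := hM2 _ (hclmem s)
      rw [Real.norm_eq_abs] at this
      exact this.trans (le_trans (le_max_right M1 M2) (le_max_left _ _))
    -- the linear vector field
    set v : ℝ → ℝ × ℝ → ℝ × ℝ :=
      fun t z => (z.2 - P0 (cl t) * z.1, -(Q0 (cl t) * z.1)) with hv
    have hlip : ∀ t, LipschitzOnWith (1 + M).toNNReal (v t) univ := by
      intro t
      apply LipschitzWith.lipschitzOnWith
      apply LipschitzWith.of_dist_le_mul
      intro y z
      rw [Real.coe_toNNReal _ (by linarith)]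
      have hd1 : dist y.1 z.1 ≤ dist y z := by rw [Prod.dist_eq]; exact le_max_left _ _
      have hd2 : dist y.2 z.2 ≤ dist y z := by rw [Prod.dist_eq]; exact le_max_right _ _
      have hdn : (0 : ℝ) ≤ dist y z := dist_nonneg
      rw [Real.dist_eq] at hd1 hd2
      rw [Prod.dist_eq]
      apply max_le
      · rw [Real.dist_eq]
        have e1 : y.2 - P0 (cl t) * y.1 - (z.2 - P0 (cl t) * z.1)
            = (y.2 - z.2) + -(P0 (cl t) * (y.1 - z.1)) := by ring
        simp only [hv]
        rw [e1]
        calc |(y.2 - z.2) + -(P0 (cl t) * (y.1 - z.1))|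
            ≤ |y.2 - z.2| + |-(P0 (cl t) * (y.1 - z.1))| := abs_add_le _ _
          _ = |y.2 - z.2| + |P0 (cl t)| * |y.1 - z.1| := by rw [abs_neg, abs_mul]
          _ ≤ dist y z + M * dist y z := by
              have := hPb t
              have h4 : |P0 (cl t)| * |y.1 - z.1| ≤ M * dist y z :=
                mul_le_mul this hd1 (abs_nonneg _) hM0
              linarith
          _ = (1 + M) * dist y z := by ring
      · rw [Real.dist_eq]
        simp only [hv]
        have e1 : -(Q0 (cl t) * y.1) - -(Q0 (cl t) * z.1) = -(Q0 (cl t) * (y.1 - z.1)) := by ring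
        rw [e1, abs_neg, abs_mul]
        have h4 : |Q0 (cl t)| * |y.1 - z.1| ≤ M * dist y z :=
          mul_le_mul (hQb t) hd1 (abs_nonneg _) hM0
        nlinarith
    have hyd : ∀ s ∈ Ioo a b,
        HasDerivAt (fun s => ((G s, H s) : ℝ × ℝ)) (v s (G s, H s)) s ∧
          ((G s, H s) : ℝ × ℝ) ∈ univ := by
      intro s hs
      refine ⟨?_, mem_univ _⟩
      have h1 := (hGd s).prodMk (hHd s)
      convert h1 using 1
      simp only [hv, hclid s hs, Prod.mk.injEq]
      exact ⟨by ring, trivial⟩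
    have hzero : ∀ s ∈ Ioo a b,
        HasDerivAt (fun _ : ℝ => ((0, 0) : ℝ × ℝ)) (v s ((0, 0) : ℝ × ℝ)) s ∧
          ((0, 0) : ℝ × ℝ) ∈ univ := by
      intro s hs
      refine ⟨?_, mem_univ _⟩
      have h0 : v s ((0, 0) : ℝ × ℝ) = ((0, 0) : ℝ × ℝ) := by simp [hv]
      rw [h0]
      exact hasDerivAt_const _ _
    have heq := ODE_solution_unique_of_mem_Ioo (fun t _ => hlip t) h0ab hyd hzero
      (by simp only [hG0, hH0])
    have h6 : ((G τ, H τ) : ℝ × ℝ) = ((0, 0) : ℝ × ℝ) := heq hτab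
    have hGτ : G τ = 0 := congrArg Prod.fst h6
    have hHτ : H τ = 0 := congrArg Prod.snd h6
    constructor
    · simp only [hG] at hGτ; linarith
    · simp only [hH] at hHτ; linarith
  -- non-crossing of characteristics
  have noncross : ∀ c c' t : ℝ, X c t = X c' t → c = c' := by
    intro c c' t hXt
    have k1 := key c t
    have k2 := key c' t
    rw [hXt] at k1
    have hAcc : A c = A c' := by rw [← k1.2, ← k2.2]
    have hBcc : B c = B c' := by
      have h1 := k1.1.symm.trans k2.1
      rw [hAcc] at h1; linarith
    have h2 := (hX c t).symm.trans (hXt.trans (hX c' t))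
    rw [hAcc, hBcc] at h2; linarith
  constructor
  · intro t c c' hcc
    show X c t < X c' t
    by_contra hcon
    push_neg at hcon
    have hne : X c' t ≠ X c t := fun h => absurd (noncross c' c t h) (ne_of_gt hcc)
    have hlt : X c' t < X c t := lt_of_le_of_ne hcon hne
    set f : ℝ → ℝ := fun s => X c' s - X c s with hf
    have hfc : Continuous f := by
      simp only [hf, hX]; fun_prop
    have hf0 : 0 < f 0 := by simp only [hf, hX]; norm_num; linarith
    have hft : f t < 0 := by simp only [hf]; linarith
    have : ∃ s, f s = 0 := by
      rcases le_or_gt 0 t with h | h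
      · have := intermediate_value_Icc' h hfc.continuousOn
        have h0 : (0 : ℝ) ∈ Icc (f t) (f 0) := ⟨hft.le, hf0.le⟩
        obtain ⟨s, _, hs⟩ := this h0
        exact ⟨s, hs⟩
      · have := intermediate_value_Icc h.le hfc.continuousOn
        have h0 : (0 : ℝ) ∈ Icc (f t) (f 0) := ⟨hft.le, hf0.le⟩
        obtain ⟨s, _, hs⟩ := this h0
        exact ⟨s, hs⟩
    obtain ⟨s, hs⟩ := this
    have : X c' s = X c s := by simp only [hf] at hs; linarith
    exact absurd (noncross c' c s this) (ne_of_gt hcc)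
  · intro c c' hne t hcontra
    exact hne (noncross c c' t (congrArg Prod.fst hcontra))
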